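/- Let p be a prime with p ≡ 1 (mod 3). Then there exist integers c and d with 4p = c² + 27d², and c is unique up to sign; moreover exactly one of c, -c is ≡ -1 (mod 3). -/

import Mathlib

lemma bmod_spec (a : ℤ) (k : ℕ) (hk : 0 < k) :
    ∃ a₁ s : ℤ, a = a₁ + (k : ℤ) * s ∧ -(k : ℤ) ≤ 2 * a₁ ∧ 2 * a₁ ≤ (k : ℤ) - 1 := by
  obtain ⟨s, hs⟩ : (k : ℤ) ∣ Int.bmod a k - a := Int.dvd_bmod_sub_self
  refine ⟨Int.bmod a k, -s, by push_cast; linarith, ?_, ?_⟩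
  · have := Int.le_bmod (x := a) (m := k) hk; omega
  · have := Int.bmod_le (x := a) (m := k) hk; omega

lemma sq3_descent (p : ℕ) (hp : p.Prime) (hp2 : p ≠ 2) :
    ∀ k : ℕ, 0 < k → k < p → (∃ a b : ℤ, (k : ℤ) * p = a ^ 2 + 3 * b ^ 2) →
    ∃ a b : ℤ, (p : ℤ) = a ^ 2 + 3 * b ^ 2 := by
  intro k
  induction k using Nat.strong_induction_on with
  | _ k IH =>
  rintro hk0 hkp ⟨a, b, hab⟩
  by_cases hk1 : k = 1
  · subst hk1; exact ⟨a, b, by push_cast at hab; linarith⟩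
  have hk2 : 2 ≤ k
  · omega
  obtain ⟨a₁, s, ha, hA1l, hA1r⟩ := bmod_spec a k hk0
  obtain ⟨b₁, t, hb, hB1l, hB1r⟩ := bmod_spec b k hk0
  obtain ⟨R, hR⟩ : ∃ R : ℤ, a₁ ^ 2 + 3 * b₁ ^ 2 = (k : ℤ) * R :=
    ⟨(p : ℤ) + -(2 * a₁ * s) + -(6 * b₁ * t) + -(k * s ^ 2) + -(3 * k * t ^ 2), by
      rw [ha] at hab; rw [hb] at hab; linear_combination -hab⟩
  have hk0' : (0 : ℤ) < k := by exact_mod_cast hk0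
  have hR0 : 0 ≤ R := by nlinarith [sq_nonneg a₁, sq_nonneg b₁]
  have hRk : R ≤ k := by nlinarith
  rcases eq_or_lt_of_le hR0 with hR0' | hR0'
  · -- R = 0 : k ∣ p, contradiction
    exfalso
    have ha10 : a₁ = 0 := by nlinarith [sq_nonneg a₁, sq_nonneg b₁]
    have hb10 : b₁ = 0 := by nlinarith [sq_nonneg a₁, sq_nonneg b₁]
    have heq : (k : ℤ) * p = (k:ℤ) * (k * (s ^ 2 + 3 * t ^ 2)) := by
      rw [hab, ha, hb, ha10, hb10]; ring
    have hdvd : (k : ℤ) ∣ (p : ℤ) := ⟨_, mul_left_cancel₀ (ne_of_gt hk0') heq⟩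
    have : k ∣ p := by exact_mod_cast hdvd
    rcases (Nat.Prime.eq_one_or_self_of_dvd hp k this) with h | h <;> omega
  rcases eq_or_lt_of_le hRk with hRk' | hRk'
  · -- R = k : forces k even hence p even, contradiction
    exfalso
    have hR2 : a₁ ^ 2 + 3 * b₁ ^ 2 = (k:ℤ) ^ 2 := by rw [hRk'] at hR; rw [hR]; ring
    have hA2 : 4 * a₁ ^ 2 ≤ (k:ℤ) ^ 2 := by nlinarith [mul_nonneg (by linarith : (0:ℤ) ≤ (k:ℤ) + 2*a₁) (by linarith : (0:ℤ) ≤ (k:ℤ) - 2*a₁)]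
    have hB2 : 4 * b₁ ^ 2 ≤ (k:ℤ) ^ 2 := by nlinarith [mul_nonneg (by linarith : (0:ℤ) ≤ (k:ℤ) + 2*b₁) (by linarith : (0:ℤ) ≤ (k:ℤ) - 2*b₁)]
    have h4a : 4 * a₁ ^ 2 = (k:ℤ) ^ 2 := by linarith
    have h4b : 4 * b₁ ^ 2 = (k:ℤ) ^ 2 := by linarith
    have h2a : 2 * a₁ = -(k:ℤ) := by
      have h : (2 * a₁ - k) * (2 * a₁ + k) = 0 := by linear_combination h4a
      rcases mul_eq_zero.mp h with h | h
      · omega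
      · linarith
    have h2b : 2 * b₁ = -(k:ℤ) := by
      have h : (2 * b₁ - k) * (2 * b₁ + k) = 0 := by linear_combination h4b
      rcases mul_eq_zero.mp h with h | h
      · omega
      · linarith
    -- a = a₁(1 - 2s), b = a₁(1 - 2t); k*p = 4 a₁² * w with k = -2a₁
    have hkk : (k : ℤ) = -(2 * a₁) := by linarith
    have hba : b₁ = a₁ := by linarith
    have hw : (k:ℤ) * p = (k:ℤ) * ((k:ℤ) * (1 - s + s^2 - 3*t + 3*t^2)) := by
      rw [hab, ha, hb, hba]
      linear_combination (2*a₁ - (k:ℤ) + (k:ℤ)*s + 3*(k:ℤ)*t) * hkk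
    have hpk : (p:ℤ) = (k:ℤ) * (1 - s + s^2 - 3*t + 3*t^2) :=
      mul_left_cancel₀ (ne_of_gt hk0') hw
    have h2p : (2:ℤ) ∣ (p:ℤ) := ⟨(-a₁) * (1 - s + s^2 - 3*t + 3*t^2), by rw [hpk, hkk]; ring⟩
    have : 2 ∣ p := by exact_mod_cast h2p
    rcases hp.eq_one_or_self_of_dvd 2 this with h | h <;> omega
  · -- 0 < R < k : descent step
    obtain ⟨U, hU⟩ : ∃ U : ℤ, a * a₁ + 3 * b * b₁ = (k:ℤ) * U :=
      ⟨R + s * a₁ + 3 * t * b₁, by rw [ha, hb]; linear_combination hR⟩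
    obtain ⟨V, hV⟩ : ∃ V : ℤ, a * b₁ - b * a₁ = (k:ℤ) * V :=
      ⟨s * b₁ - t * a₁, by rw [ha, hb]; ring⟩
    have key : (k:ℤ)^2 * (R * p) = (k:ℤ)^2 * (U ^ 2 + 3 * V ^ 2) := by
      have : ((k:ℤ) * p) * ((k:ℤ) * R) = (a * a₁ + 3 * b * b₁) ^ 2 + 3 * (a * b₁ - b * a₁) ^ 2 := by
        rw [hab, ← hR]; ring
      rw [hU, hV] at this; linear_combination this
    have hRp : (R : ℤ) * p = U ^ 2 + 3 * V ^ 2 := mul_left_cancel₀ (by positivity) key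
    have hRnat : R = ((R.toNat : ℕ) : ℤ) := by omega
    refine IH R.toNat ?_ ?_ ?_ ⟨U, V, by rw [← hRnat]; exact hRp⟩ <;> omega

lemma exists_sqrt_neg3 (p : ℕ) (hp : p.Prime) (h3 : p % 3 = 1) :
    ∃ x : ℤ, (p : ℤ) ∣ x ^ 2 + 3 := by
  haveI : Fact p.Prime := ⟨hp⟩
  have hcard : 3 ∣ Fintype.card (ZMod p)ˣ := by
    rw [ZMod.card_units_eq_totient, Nat.totient_prime hp]
    omega
  obtain ⟨u, hu⟩ := exists_prime_orderOf_dvd_card (G := (ZMod p)ˣ) 3 hcard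
  set ω : ZMod p := (u : ZMod p) with hω
  have hu3 : ω ^ 3 = 1 := by
    have : u ^ 3 = 1 := by rw [← hu]; exact pow_orderOf_eq_one u
    calc ω ^ 3 = ((u ^ 3 : (ZMod p)ˣ) : ZMod p) := by push_cast; ring
    _ = 1 := by rw [this]; rfl
  have hu1 : ω ≠ 1 := by
    intro h
    have : u = 1 := Units.ext (by rw [Units.val_one]; exact h)
    rw [this] at hu; simp at hu
  have hsum : ω ^ 2 + ω + 1 = 0 := by
    have hfac : (ω - 1) * (ω ^ 2 + ω + 1) = 0 := by
      have : ω ^ 3 - 1 = 0 := by rw [hu3]; ring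
      calc (ω - 1) * (ω ^ 2 + ω + 1) = ω ^ 3 - 1 := by ring
      _ = 0 := this
    rcases mul_eq_zero.mp hfac with h | h
    · exact absurd (by linear_combination h) hu1
    · exact h
  have key : ((2 : ZMod p) * ω + 1) ^ 2 + 3 = 0 := by linear_combination 4 * hsum
  refine ⟨((2 * ω + 1 : ZMod p)).val, ?_⟩
  have : ((((2 * ω + 1 : ZMod p)).val : ℤ) ^ 2 + 3 : ℤ) = 0 → True := fun _ => trivial
  rw [← ZMod.intCast_zmod_eq_zero_iff_dvd]
  push_cast
  rw [ZMod.natCast_val, ZMod.cast_id]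
  exact key

lemma p_eq_sq_add_three_sq (p : ℕ) (hp : p.Prime) (h3 : p % 3 = 1) :
    ∃ a b : ℤ, (p : ℤ) = a ^ 2 + 3 * b ^ 2 := by
  have hp7 : 7 ≤ p := by
    rcases Nat.lt_or_ge p 7 with h | h
    · interval_cases p <;> first | omega | exact absurd hp (by norm_num)
    · exact h
  obtain ⟨x, hx⟩ := exists_sqrt_neg3 p hp h3
  obtain ⟨x₁, s, hxs, hxl, hxr⟩ := bmod_spec x p (by omega)
  have hx1 : (p : ℤ) ∣ x₁ ^ 2 + 3 := by
    obtain ⟨m, hm⟩ := hx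
    refine ⟨m - (2 * x₁ * s + p * s ^ 2), ?_⟩
    rw [hxs] at hm; linear_combination hm
  obtain ⟨K, hK⟩ := hx1
  have hp0 : (0 : ℤ) < p := by exact_mod_cast (by omega : 0 < p)
  have hK0 : 0 < K := by nlinarith [sq_nonneg x₁]
  have hKp : K < p := by nlinarith [sq_nonneg x₁]
  have hKnat : K = ((K.toNat : ℕ) : ℤ) := by omega
  refine sq3_descent p hp (by omega) K.toNat (by omega) (by omega) ⟨x₁, 1, ?_⟩
  rw [← hKnat]; linear_combination -hK

theorem four_p_eq_c2_add_27d2 (p : ℕ) (hp : p.Prime) (h3 : p % 3 = 1) :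
    (∃ c d : ℤ, 4 * (p : ℤ) = c ^ 2 + 27 * d ^ 2) ∧
    (∀ c d c' d' : ℤ, 4 * (p : ℤ) = c ^ 2 + 27 * d ^ 2 →
      4 * (p : ℤ) = c' ^ 2 + 27 * d' ^ 2 → c = c' ∨ c = -c') ∧
    (∀ c d : ℤ, 4 * (p : ℤ) = c ^ 2 + 27 * d ^ 2 →
      Xor' ((c : ZMod 3) = -1) (((-c : ℤ) : ZMod 3) = -1)) := by
  have hp0 : (0 : ℤ) < p := by exact_mod_cast hp.pos
  refine ⟨?_, ?_, ?_⟩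
  · -- existence
    obtain ⟨a, b, hab⟩ := p_eq_sq_add_three_sq p hp h3
    have hpm : (p : ℤ) % 3 = 1 := by omega
    have h3a : (3 : ℤ) ∣ a ^ 2 - 1 := by
      obtain ⟨m, hm⟩ : (3:ℤ) ∣ (p:ℤ) - 1 := by omega
      exact ⟨m - b ^ 2, by linear_combination hm - hab⟩
    have hb3 : (3 : ℤ) ∣ b * ((b - 1) * (b + 1)) := by
      have : b % 3 = 0 ∨ b % 3 = 1 ∨ b % 3 = 2 := by omega
      rcases this with h | h | h
      · exact Dvd.dvd.mul_right (by omega) _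
      · exact Dvd.dvd.mul_left (Dvd.dvd.mul_right (by omega : (3:ℤ) ∣ b - 1) _) _
      · exact Dvd.dvd.mul_left (Dvd.dvd.mul_left (by omega : (3:ℤ) ∣ b + 1) _) _
    have hsplit : (3 : ℤ) ∣ b * ((a - b) * (a + b)) := by
      obtain ⟨m, hm⟩ := h3a
      obtain ⟨n, hn⟩ := hb3
      exact ⟨b * m - n, by linear_combination b * hm - hn⟩
    have h3p : Prime (3 : ℤ) := Int.prime_three
    rcases (h3p.dvd_mul.mp hsplit) with hc | hc
    · obtain ⟨d, hd⟩ := hc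
      exact ⟨2 * a, 2 * d, by rw [hd] at hab; linear_combination 4 * hab⟩
    rcases (h3p.dvd_mul.mp hc) with hc' | hc'
    · obtain ⟨d, hd⟩ := hc'
      exact ⟨a + 3 * b, d, by linear_combination 4 * hab + 3 * (a - b + 3 * d) * hd⟩
    · obtain ⟨d, hd⟩ := hc'
      exact ⟨a - 3 * b, d, by linear_combination 4 * hab + 3 * (a + b + 3 * d) * hd⟩
  · -- uniqueness up to sign
    intro c d c' d' h h'
    have hpZ : Prime (p : ℤ) := Nat.prime_iff_prime_int.mp hp
    have hprod : (p : ℤ) ∣ (c * d' - c' * d) * (c * d' + c' * d) :=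
      ⟨4 * (d' ^ 2 - d ^ 2), by linear_combination d ^ 2 * h' - d' ^ 2 * h⟩
    have hsq : (c * d') ^ 2 = (c' * d) ^ 2 := by
      rcases hpZ.dvd_mul.mp hprod with hdvd | hdvd
      · obtain ⟨m, hm⟩ := hdvd
        by_cases hm0 : m = 0
        · rw [hm0, mul_zero] at hm; linear_combination (c * d' + c' * d) * hm
        · exfalso
          have h1 : 1 ≤ m ^ 2 := by
            rcases lt_or_gt_of_ne hm0 with hmm | hmm <;> nlinarith
          have hid0 : (c * c' + 27 * d * d') ^ 2 + 27 * (c * d' - c' * d) ^ 2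
              = (c ^ 2 + 27 * d ^ 2) * (c' ^ 2 + 27 * d' ^ 2) := by ring
          rw [hm, ← h, ← h'] at hid0
          nlinarith [sq_nonneg (c * c' + 27 * d * d'), sq_nonneg ((p:ℤ) * m), sq_nonneg m]
      · obtain ⟨m, hm⟩ := hdvd
        by_cases hm0 : m = 0
        · rw [hm0, mul_zero] at hm; linear_combination (c * d' - c' * d) * hm
        · exfalso
          have h1 : 1 ≤ m ^ 2 := by
            rcases lt_or_gt_of_ne hm0 with hmm | hmm <;> nlinarith
          have hid0 : (c * c' - 27 * d * d') ^ 2 + 27 * (c * d' + c' * d) ^ 2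
              = (c ^ 2 + 27 * d ^ 2) * (c' ^ 2 + 27 * d' ^ 2) := by ring
          rw [hm, ← h, ← h'] at hid0
          nlinarith [sq_nonneg (c * c' - 27 * d * d'), sq_nonneg ((p:ℤ) * m), sq_nonneg m]
    have e1 : c ^ 2 * d' ^ 2 = c' ^ 2 * d ^ 2 := by linear_combination hsq
    have e2 : 4 * (p:ℤ) * (d' ^ 2 - d ^ 2) = 0 := by
      linear_combination d' ^ 2 * h - d ^ 2 * h' + e1
    have hd2 : d ^ 2 = d' ^ 2 := by
      rcases mul_eq_zero.mp e2 with h0 | h0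
      · exfalso; nlinarith
      · linarith
    have hc2 : c ^ 2 = c' ^ 2 := by linarith
    have : (c - c') * (c + c') = 0 := by linear_combination hc2
    rcases mul_eq_zero.mp this with h0 | h0
    · left; linarith
    · right; linarith
  · -- Xor
    intro c d h
    have hc1 : ((c : ZMod 3)) ^ 2 = 1 := by
      have hcast : (4 * (p : ℤ) : ZMod 3) = ((c ^ 2 + 27 * d ^ 2 : ℤ) : ZMod 3) := by
        exact_mod_cast congrArg (fun z : ℤ => (z : ZMod 3)) h
      have hp1 : ((p : ℕ) : ZMod 3) = 1 := by
        rw [← ZMod.natCast_mod p 3, h3]; norm_num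
      push_cast at hcast
      rw [hp1] at hcast
      have h27 : (27 : ZMod 3) = 0 := by decide
      have h4 : (4 : ZMod 3) = 1 := by decide
      rw [h27, h4] at hcast
      simpa using hcast.symm
    have hneg : ((-c : ℤ) : ZMod 3) = -(c : ZMod 3) := by push_cast; ring
    rw [hneg]
    revert hc1
    generalize ((c : ℤ) : ZMod 3) = x
    revert x
    unfold Xor'
    decide
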